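/- In a group, suppose [x, z]^{p^i} = 1, x^t = x^p, and [[x, z^t], x] = 1. Then [x, z^t]^{p^{i+1}} = 1. -/
import Mathlib


/-- The commutator `[a,b] = a⁻¹b⁻¹ab`. -/
def br {G : Type*} [Group G] (a b : G) : G := a⁻¹ * b⁻¹ * a * b

/-- Conjugation `a^b = b⁻¹ab`. -/
def cnj {G : Type*} [Group G] (a b : G) : G := b⁻¹ * a * b

lemma br_pow_left {G : Type*} [Group G] (x w : G) (hc : Commute x (br x w)) (n : ℕ) :
    br (x ^ n) w = br x w ^ n := by
  induction n with
  | zero => simp [br]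
  | succ n ih =>
    have key : br (x ^ (n + 1)) w = x⁻¹ * br (x ^ n) w * x * br x w := by
      simp only [br, pow_succ]
      group
    rw [key, ih]
    have := (hc.pow_right n).symm
    calc x⁻¹ * br x w ^ n * x * br x w = x⁻¹ * (br x w ^ n * x) * br x w := by group
      _ = x⁻¹ * (x * br x w ^ n) * br x w := by rw [this.eq]
      _ = br x w ^ (n + 1) := by group

/-- in a group, if `[x,z]^{p^i} = 1`, `x^t = x^p` and `[[x,z^t],x] = 1`,
then `[x, z^t]^{p^{i+1}} = 1`. -/
theorem commutator_power_step {G : Type*} [Group G] (p : ℕ) (hp : 0 < p) (i : ℕ)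
    (x z t : G) (h1 : br x z ^ p ^ i = 1) (h2 : cnj x t = x ^ p)
    (h3 : br (br x (cnj z t)) x = 1) :
    br x (cnj z t) ^ p ^ (i + 1) = 1 := by
  set w := cnj z t with hw
  have hc : Commute x (br x w) := by
    have h0 : (br x w)⁻¹ * x⁻¹ * br x w * x = 1 := h3
    have e : (br x w)⁻¹ * x⁻¹ * (br x w * x) = 1 := by rw [← h0]; group
    rw [commute_iff_eq]
    symm
    calc br x w * x = (x * br x w) * ((br x w)⁻¹ * x⁻¹ * (br x w * x)) := by group
      _ = x * br x w := by rw [e]; group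
  have hp1 : br (x ^ p) w = br x w ^ p := br_pow_left x w hc p
  have hconj : br (x ^ p) w = t⁻¹ * br x z * t := by
    rw [← h2]; simp only [br, cnj, hw]; group
  have key : br x w ^ p = t⁻¹ * br x z * t := by rw [← hp1, hconj]
  have final : br x w ^ p ^ (i + 1) = t⁻¹ * br x z ^ p ^ i * t := by
    rw [pow_succ', pow_mul, key]
    rw [show t⁻¹ * br x z * t = t⁻¹ * br x z * t⁻¹⁻¹ by group, conj_pow]
    group
  rw [final, h1]; group
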